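/- arXiv:2302.04493 — 3 statements merged into one kernel-verified Lean document; each statement's English description precedes it below -/
import Mathlib

section
/- Let t be an m-trace on an ideal I of a pivotal k-category C and N_t its kernel as defined by N_t(V,W) = { f : V → W | t_U(g₁∘f∘g₂) = 0 for all U ∈ I, g₁ : W → U, g₂ : U → V }. If f ∈ N_t(V,W) and V', V'' are objects of C, then id_{V'} ⊗ f ⊗ id_{V''} ∈ N_t(V'⊗V⊗V'', V'⊗W⊗V''). -/
open CategoryTheory CategoryTheory.MonoidalCategory

namespace SkeinPaper

/-- A pivotal structure: a dual object with four (co)evaluation morphisms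
satisfying the zig-zag identities. -/
class PivotalData (C : Type*) [Category C] [MonoidalCategory C] where
  dual : C → C
  coev : ∀ V : C, 𝟙_ C ⟶ V ⊗ dual V
  ev : ∀ V : C, dual V ⊗ V ⟶ 𝟙_ C
  coev' : ∀ V : C, 𝟙_ C ⟶ dual V ⊗ V
  ev' : ∀ V : C, V ⊗ dual V ⟶ 𝟙_ C
  zig1 : ∀ V : C, (λ_ V).inv ≫ (coev V ▷ V) ≫ (α_ V (dual V) V).hom ≫ (V ◁ ev V) ≫
    (ρ_ V).hom = 𝟙 V
  zig2 : ∀ V : C, (ρ_ (dual V)).inv ≫ (dual V ◁ coev V) ≫ (α_ (dual V) V (dual V)).inv ≫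
    (ev V ▷ dual V) ≫ (λ_ (dual V)).hom = 𝟙 (dual V)
  zig3 : ∀ V : C, (ρ_ V).inv ≫ (V ◁ coev' V) ≫ (α_ V (dual V) V).inv ≫ (ev' V ▷ V) ≫
    (λ_ V).hom = 𝟙 V
  zig4 : ∀ V : C, (λ_ (dual V)).inv ≫ (coev' V ▷ dual V) ≫ (α_ (dual V) V (dual V)).hom ≫
    (dual V ◁ ev' V) ≫ (ρ_ (dual V)).hom = 𝟙 (dual V)

open PivotalData

variable {C : Type*} [Category C] [MonoidalCategory C] [PivotalData C]

/-- The dual of a morphism. -/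
def dualHom {V W : C} (f : V ⟶ W) : dual W ⟶ dual V :=
  (ρ_ (dual W)).inv ≫ (dual W ◁ coev V) ≫ (dual W ◁ (f ▷ dual V)) ≫
    (α_ (dual W) W (dual V)).inv ≫ (ev W ▷ dual V) ≫ (λ_ (dual V)).hom

/-- Right partial trace of `f : U ⊗ W ⟶ U ⊗ W`. -/
def ptrR {U W : C} (f : U ⊗ W ⟶ U ⊗ W) : U ⟶ U :=
  (ρ_ U).inv ≫ (U ◁ coev W) ≫ (α_ U W (dual W)).inv ≫ (f ▷ dual W) ≫
    (α_ U W (dual W)).hom ≫ (U ◁ ev' W) ≫ (ρ_ U).hom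

/-- Left partial trace of `g : W ⊗ U ⟶ W ⊗ U`. -/
def ptrL {U W : C} (g : W ⊗ U ⟶ W ⊗ U) : U ⟶ U :=
  (λ_ U).inv ≫ (coev' W ▷ U) ≫ (α_ (dual W) W U).hom ≫ (dual W ◁ g) ≫
    (α_ (dual W) W U).inv ≫ (ev W ▷ U) ≫ (λ_ U).hom

/-- An ideal of objects: a class of objects closed under tensoring with arbitrary
objects and under retracts. -/
structure CatIdeal (C : Type*) [Category C] [MonoidalCategory C] where
  mem : C → Prop
  tensor_right : ∀ ⦃V : C⦄ (W : C), mem V → mem (V ⊗ W)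
  tensor_left : ∀ ⦃V : C⦄ (W : C), mem V → mem (W ⊗ V)
  retract : ∀ ⦃W V : C⦄ (f : W ⟶ V) (g : V ⟶ W), f ≫ g = 𝟙 W → mem V → mem W

variable (k : Type*) [Field k]

section Trace
variable [Preadditive C] [Linear k C]

/-- A right m-trace on an ideal. -/
structure RightMTrace (I : CatIdeal C) where
  t : ∀ V : C, I.mem V → ((V ⟶ V) →ₗ[k] k)
  cyclic : ∀ {U V : C} (hU : I.mem U) (hV : I.mem V) (f : V ⟶ U) (g : U ⟶ V),
    t V hV (f ≫ g) = t U hU (g ≫ f)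
  rightPartial : ∀ {U : C} (W : C) (hU : I.mem U) (f : U ⊗ W ⟶ U ⊗ W),
    t (U ⊗ W) (I.tensor_right W hU) f = t U hU (ptrR f)

/-- An m-trace on an ideal: cyclic, with both the right and left partial trace
properties. -/
structure MTrace (I : CatIdeal C) where
  t : ∀ V : C, I.mem V → ((V ⟶ V) →ₗ[k] k)
  cyclic : ∀ {U V : C} (hU : I.mem U) (hV : I.mem V) (f : V ⟶ U) (g : U ⟶ V),
    t V hV (f ≫ g) = t U hU (g ≫ f)
  rightPartial : ∀ {U : C} (W : C) (hU : I.mem U) (f : U ⊗ W ⟶ U ⊗ W),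
    t (U ⊗ W) (I.tensor_right W hU) f = t U hU (ptrR f)
  leftPartial : ∀ {U : C} (W : C) (hU : I.mem U) (g : W ⊗ U ⟶ W ⊗ U),
    t (W ⊗ U) (I.tensor_left W hU) g = t U hU (ptrL g)

/-- The kernel of a right m-trace. -/
def RightMTrace.inKer {I : CatIdeal C} (τ : RightMTrace k I) {V W : C} (f : V ⟶ W) : Prop :=
  ∀ (U : C) (hU : I.mem U) (g₁ : W ⟶ U) (g₂ : U ⟶ V), τ.t U hU (g₂ ≫ f ≫ g₁) = 0

/-- The kernel of an m-trace. -/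
def MTrace.inKer {I : CatIdeal C} (τ : MTrace k I) {V W : C} (f : V ⟶ W) : Prop :=
  ∀ (U : C) (hU : I.mem U) (g₁ : W ⟶ U) (g₂ : U ⟶ V), τ.t U hU (g₂ ≫ f ≫ g₁) = 0

/-- A tensor ideal of morphisms. -/
structure TensorIdealHom where
  N : ∀ V W : C, Submodule k (V ⟶ W)
  comp_pre : ∀ {V W X : C} (h : X ⟶ V) {f : V ⟶ W}, f ∈ N V W → h ≫ f ∈ N X W
  comp_post : ∀ {V W X : C} (h : W ⟶ X) {f : V ⟶ W}, f ∈ N V W → f ≫ h ∈ N V X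
  tensor_left : ∀ {V W V' W' : C} (g : V' ⟶ W') {f : V ⟶ W}, f ∈ N V W →
    (g ⊗ₘ f) ∈ N (V' ⊗ V) (W' ⊗ W)
  tensor_right : ∀ {V W V' W' : C} (g : V' ⟶ W') {f : V ⟶ W}, f ∈ N V W →
    (f ⊗ₘ g) ∈ N (V ⊗ V') (W ⊗ W')

end Trace

end SkeinPaper

namespace SkeinPaper
open PivotalData
variable {C : Type*} [Category C] [MonoidalCategory C] [PivotalData C]

/-- `(coev V, ev V)` exhibit `dual V` as a right dual of `V`. -/
def epStd (V : C) : ExactPairing V (dual V) where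
  coevaluation' := coev V
  evaluation' := ev V
  coevaluation_evaluation' := by
    rw [← cancel_epi (ρ_ (dual V)).inv, ← cancel_mono (λ_ (dual V)).hom]
    simpa using zig2 V
  evaluation_coevaluation' := by
    rw [← cancel_epi (λ_ V).inv, ← cancel_mono (ρ_ V).hom]
    simpa using zig1 V

/-- `(coev' V, ev' V)` exhibit `dual V` as a left dual of `V`. -/
def epPrime (V : C) : ExactPairing (dual V) V where
  coevaluation' := coev' V
  evaluation' := ev' V
  coevaluation_evaluation' := by
    rw [← cancel_epi (ρ_ V).inv, ← cancel_mono (λ_ V).hom]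
    simpa using zig3 V
  evaluation_coevaluation' := by
    rw [← cancel_epi (λ_ (dual V)).inv, ← cancel_mono (ρ_ (dual V)).hom]
    simpa using zig4 V

/-- Comparison iso between two right duals of `dual S`. -/
def isoR1 (S : C) : S ≅ dual (dual S) := rightDualIso (epPrime S) (epStd (dual S))
/-- Comparison iso between two left duals of `dual S`. -/
def isoR2 (S : C) : S ≅ dual (dual S) := leftDualIso (epStd S) (epPrime (dual S))
def isoL2 (T : C) : dual (dual T) ≅ T := rightDualIso (epStd (dual T)) (epPrime T)

/-- Generalized right partial trace, for non-endomorphisms. -/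
def gptrR {M N : C} (W : C) (F : M ⊗ W ⟶ N ⊗ W) : M ⟶ N :=
  (ρ_ M).inv ≫ (M ◁ coev W) ≫ (α_ M W (dual W)).inv ≫ (F ▷ dual W) ≫
    (α_ N W (dual W)).hom ≫ (N ◁ ev' W) ≫ (ρ_ N).hom

lemma ptrR_eq_gptrR {M W : C} (F : M ⊗ W ⟶ M ⊗ W) : ptrR F = gptrR W F := rfl

/-- Generalized left partial trace. -/
def gptrL {M N : C} (W : C) (F : W ⊗ M ⟶ W ⊗ N) : M ⟶ N :=
  (λ_ M).inv ≫ (coev' W ▷ M) ≫ (α_ (dual W) W M).hom ≫ (dual W ◁ F) ≫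
    (α_ (dual W) W N).inv ≫ (ev W ▷ N) ≫ (λ_ N).hom

lemma ptrL_eq_gptrL {M W : C} (F : W ⊗ M ⟶ W ⊗ M) : ptrL F = gptrL W F := rfl

def phiR (S W : C) (e : S ⊗ W ⟶ 𝟙_ C) : S ⟶ dual W :=
  (ρ_ S).inv ≫ (S ◁ coev W) ≫ (α_ S W (dual W)).inv ≫ (e ▷ dual W) ≫ (λ_ (dual W)).hom

def psiR (S W : C) (c : 𝟙_ C ⟶ S ⊗ W) : dual W ⟶ S :=
  (λ_ (dual W)).inv ≫ (c ▷ dual W) ≫ (α_ S W (dual W)).hom ≫ (S ◁ ev' W) ≫ (ρ_ S).hom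

def phiL (T W : C) (e : W ⊗ T ⟶ 𝟙_ C) : T ⟶ dual W :=
  (λ_ T).inv ≫ (coev' W ▷ T) ≫ (α_ (dual W) W T).hom ≫ (dual W ◁ e) ≫ (ρ_ (dual W)).hom

def psiL (T W : C) (c : 𝟙_ C ⟶ W ⊗ T) : dual W ⟶ T :=
  (ρ_ (dual W)).inv ≫ (dual W ◁ c) ≫ (α_ (dual W) W T).inv ≫ (ev W ▷ T) ≫ (λ_ T).hom

lemma phiR_eq (S : C) : phiR S (dual S) (ev' S) = (isoR1 S).hom := by
  letI := epPrime S; letI := epStd (dual S)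
  simp only [isoR1, rightDualIso, rightAdjointMate, phiR,
    ExactPairing.coevaluation, ExactPairing.evaluation, epPrime, epStd]
  monoidal

lemma psiR_eq (S : C) : psiR S (dual S) (coev S) = (isoR2 S).inv := by
  letI := epPrime (dual S); letI := epStd S
  simp only [isoR2, leftDualIso, leftAdjointMate, psiR,
    ExactPairing.coevaluation, ExactPairing.evaluation, epPrime, epStd]
  monoidal

lemma phiL_eq (T : C) : phiL T (dual T) (ev T) = (isoR2 T).hom := by
  letI := epPrime (dual T); letI := epStd T
  simp only [isoR2, leftDualIso, leftAdjointMate, phiL,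
    ExactPairing.coevaluation, ExactPairing.evaluation, epPrime, epStd]
  monoidal

lemma psiL_eq (T : C) : psiL T (dual T) (coev' T) = (isoL2 T).hom := by
  letI := epPrime T; letI := epStd (dual T)
  simp only [isoL2, rightDualIso, rightAdjointMate, psiL,
    ExactPairing.coevaluation, ExactPairing.evaluation, epPrime, epStd]
  monoidal

/-- Correction endomorphism for the right-hand strand. -/
def xCorr (S : C) : S ⟶ S := (isoR2 S).hom ≫ (isoR1 S).inv
/-- Correction endomorphism for the left-hand strand. -/
def yCorr (T : C) : T ⟶ T := (isoL2 T).inv ≫ (isoR2 T).inv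

lemma psiR_nat (S W : C) (c : 𝟙_ C ⟶ S ⊗ W) (u : S ⟶ S) :
    psiR S W (c ≫ (u ▷ W)) = psiR S W c ≫ u := by
  calc psiR S W (c ≫ (u ▷ W))
      = 𝟙 _ ⊗≫ c ▷ dual W ⊗≫ (u ▷ (W ⊗ dual W) ≫ S ◁ ev' W) ⊗≫ 𝟙 _ := by
        simp only [psiR, comp_whiskerRight, Category.assoc]; monoidal
    _ = 𝟙 _ ⊗≫ c ▷ dual W ⊗≫ (S ◁ ev' W ≫ u ▷ 𝟙_ C) ⊗≫ 𝟙 _ := by rw [← whisker_exchange]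
    _ = psiR S W c ≫ u := by simp only [psiR]; monoidal

lemma psiL_nat (T W : C) (c : 𝟙_ C ⟶ W ⊗ T) (u : T ⟶ T) :
    psiL T W (c ≫ (W ◁ u)) = psiL T W c ≫ u := by
  calc psiL T W (c ≫ (W ◁ u))
      = 𝟙 _ ⊗≫ dual W ◁ c ⊗≫ ((dual W ⊗ W) ◁ u ≫ ev W ▷ T) ⊗≫ 𝟙 _ := by
        simp only [psiL, MonoidalCategory.whiskerLeft_comp, Category.assoc]; monoidal
    _ = 𝟙 _ ⊗≫ dual W ◁ c ⊗≫ (ev W ▷ T ≫ 𝟙_ C ◁ u) ⊗≫ 𝟙 _ := by rw [whisker_exchange]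
    _ = psiL T W c ≫ u := by simp only [psiL]; monoidal

lemma thetaR_cancel (S : C) :
    phiR S (dual S) (ev' S) ≫ psiR S (dual S) (coev S ≫ (xCorr S ▷ dual S)) = 𝟙 S := by
  rw [psiR_nat, phiR_eq, psiR_eq, xCorr]
  simp

lemma thetaL_cancel (T : C) :
    phiL T (dual T) (ev T) ≫ psiL T (dual T) (coev' T ≫ (dual T ◁ yCorr T)) = 𝟙 T := by
  rw [psiL_nat, phiL_eq, psiL_eq, yCorr]
  simp

lemma gptrR_bend {M N P P' S W : C} (h : M ⟶ P ⊗ S) (z : P ⟶ P') (k : P' ⊗ S ⟶ N)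
    (e : S ⊗ W ⟶ 𝟙_ C) (c : 𝟙_ C ⟶ S ⊗ W) :
    gptrR W ((h ▷ W) ≫ (α_ P S W).hom ≫ (P ◁ e) ≫ (ρ_ P).hom ≫ z ≫ (ρ_ P').inv ≫
      (P' ◁ c) ≫ (α_ P' S W).inv ≫ (k ▷ W)) =
    h ≫ (z ⊗ₘ (phiR S W e ≫ psiR S W c)) ≫ k := by
  calc gptrR W ((h ▷ W) ≫ (α_ P S W).hom ≫ (P ◁ e) ≫ (ρ_ P).hom ≫ z ≫ (ρ_ P').inv ≫
      (P' ◁ c) ≫ (α_ P' S W).inv ≫ (k ▷ W))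
      = 𝟙 M ⊗≫ (M ◁ coev W ≫ h ▷ (W ⊗ dual W)) ⊗≫ (P ◁ e) ▷ dual W ⊗≫
          (z ▷ 𝟙_ C ≫ P' ◁ c) ▷ dual W ⊗≫ (k ▷ (W ⊗ dual W) ≫ N ◁ ev' W) ⊗≫ 𝟙 N := by
        simp only [gptrR]; monoidal
    _ = 𝟙 M ⊗≫ (h ▷ 𝟙_ C ≫ (P ⊗ S) ◁ coev W) ⊗≫ (P ◁ e) ▷ dual W ⊗≫
          (P ◁ c ≫ z ▷ (S ⊗ W)) ▷ dual W ⊗≫ ((P' ⊗ S) ◁ ev' W ≫ k ▷ 𝟙_ C) ⊗≫ 𝟙 N := by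
        rw [whisker_exchange h (coev W), ← whisker_exchange k (ev' W),
          ← whisker_exchange z c]
    _ = h ⊗≫ ((P ⊗ S) ◁ coev W) ⊗≫ (P ◁ e) ▷ dual W ⊗≫ (P ◁ c) ▷ dual W ⊗≫
          (z ▷ (S ⊗ (W ⊗ dual W)) ≫ P' ◁ (S ◁ ev' W)) ⊗≫ k := by
        monoidal
    _ = h ⊗≫ ((P ⊗ S) ◁ coev W) ⊗≫ (P ◁ e) ▷ dual W ⊗≫ (P ◁ c) ▷ dual W ⊗≫
          (P ◁ (S ◁ ev' W) ≫ z ▷ (S ⊗ 𝟙_ C)) ⊗≫ k := by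
        rw [← whisker_exchange z (S ◁ ev' W)]
    _ = h ≫ (z ⊗ₘ (phiR S W e ≫ psiR S W c)) ≫ k := by
        simp only [phiR, psiR, tensorHom_def']; monoidal

lemma gptrL_bend {M N Q Q' T W : C} (h : M ⟶ T ⊗ Q) (z : Q ⟶ Q') (k : T ⊗ Q' ⟶ N)
    (e : W ⊗ T ⟶ 𝟙_ C) (c : 𝟙_ C ⟶ W ⊗ T) :
    gptrL W ((W ◁ h) ≫ (α_ W T Q).inv ≫ (e ▷ Q) ≫ (λ_ Q).hom ≫ z ≫ (λ_ Q').inv ≫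
      (c ▷ Q') ≫ (α_ W T Q').hom ≫ (W ◁ k)) =
    h ≫ ((phiL T W e ≫ psiL T W c) ⊗ₘ z) ≫ k := by
  calc gptrL W ((W ◁ h) ≫ (α_ W T Q).inv ≫ (e ▷ Q) ≫ (λ_ Q).hom ≫ z ≫ (λ_ Q').inv ≫
      (c ▷ Q') ≫ (α_ W T Q').hom ≫ (W ◁ k))
      = 𝟙 M ⊗≫ (coev' W ▷ M ≫ (dual W ⊗ W) ◁ h) ⊗≫ dual W ◁ (e ▷ Q) ⊗≫
          dual W ◁ (𝟙_ C ◁ z ≫ c ▷ Q') ⊗≫ ((dual W ⊗ W) ◁ k ≫ ev W ▷ N) ⊗≫ 𝟙 N := by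
        simp only [gptrL]; monoidal
    _ = 𝟙 M ⊗≫ (𝟙_ C ◁ h ≫ coev' W ▷ (T ⊗ Q)) ⊗≫ dual W ◁ (e ▷ Q) ⊗≫
          dual W ◁ (c ▷ Q ≫ (W ⊗ T) ◁ z) ⊗≫ (ev W ▷ (T ⊗ Q') ≫ 𝟙_ C ◁ k) ⊗≫ 𝟙 N := by
        rw [← whisker_exchange (coev' W) h, whisker_exchange (ev W) k, whisker_exchange c z]
    _ = h ⊗≫ (coev' W ▷ (T ⊗ Q)) ⊗≫ dual W ◁ (e ▷ Q) ⊗≫ dual W ◁ (c ▷ Q) ⊗≫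
          (((dual W ⊗ W) ⊗ T) ◁ z ≫ (ev W ▷ T) ▷ Q') ⊗≫ k := by monoidal
    _ = h ⊗≫ (coev' W ▷ (T ⊗ Q)) ⊗≫ dual W ◁ (e ▷ Q) ⊗≫ dual W ◁ (c ▷ Q) ⊗≫
          ((ev W ▷ T) ▷ Q ≫ (𝟙_ C ⊗ T) ◁ z) ⊗≫ k := by
        rw [whisker_exchange (ev W ▷ T) z]
    _ = h ≫ ((phiL T W e ≫ psiL T W c) ⊗ₘ z) ≫ k := by
        simp only [phiL, psiL, MonoidalCategory.tensorHom_def]; monoidal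

/-- The corrected cup for the right strand. -/
def cRt (S : C) : 𝟙_ C ⟶ S ⊗ dual S := coev S ≫ (xCorr S ▷ dual S)
/-- The corrected cup for the left strand. -/
def cLt (T : C) : 𝟙_ C ⟶ dual T ⊗ T := coev' T ≫ (dual T ◁ yCorr T)

lemma thetaR_cancel' (S : C) :
    phiR S (dual S) (ev' S) ≫ psiR S (dual S) (cRt S) = 𝟙 S := thetaR_cancel S

lemma thetaL_cancel' (T : C) :
    phiL T (dual T) (ev T) ≫ psiL T (dual T) (cLt T) = 𝟙 T := thetaL_cancel T

section Assembly

variable {V W : C} (f : V ⟶ W) (V' V'' U : C)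

/-- The middle morphism: left cap, `f`, corrected left cup. -/
def Zc : dual V' ⊗ (V' ⊗ V) ⟶ dual V' ⊗ (V' ⊗ W) :=
  (α_ (dual V') V' V).inv ≫ (ev V' ▷ V) ≫ (λ_ V).hom ≫ f ≫ (λ_ W).inv ≫
    (cLt V' ▷ W) ≫ (α_ (dual V') V' W).hom

variable {U} (g₂ : U ⟶ (V' ⊗ V) ⊗ V'') (g₁ : (V' ⊗ W) ⊗ V'' ⟶ U)

/-- The transported "top" morphism `(V')* ⊗ U ⊗ (V'')* ⟶ V`. -/
def G₂ : (dual V' ⊗ U) ⊗ dual V'' ⟶ V :=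
  (((dual V' ◁ g₂) ≫ (α_ (dual V') (V' ⊗ V) V'').inv) ▷ dual V'') ≫
    (α_ (dual V' ⊗ (V' ⊗ V)) V'' (dual V'')).hom ≫
    ((dual V' ⊗ (V' ⊗ V)) ◁ ev' V'') ≫ (ρ_ (dual V' ⊗ (V' ⊗ V))).hom ≫
    (α_ (dual V') V' V).inv ≫ (ev V' ▷ V) ≫ (λ_ V).hom

/-- The transported "bottom" morphism `W ⟶ (V')* ⊗ U ⊗ (V'')*`. -/
def G₁ : W ⟶ (dual V' ⊗ U) ⊗ dual V'' :=
  (λ_ W).inv ≫ (cLt V' ▷ W) ≫ (α_ (dual V') V' W).hom ≫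
    (ρ_ (dual V' ⊗ (V' ⊗ W))).inv ≫ ((dual V' ⊗ (V' ⊗ W)) ◁ cRt V'') ≫
    (α_ (dual V' ⊗ (V' ⊗ W)) V'' (dual V'')).inv ≫
    (((α_ (dual V') (V' ⊗ W) V'').hom ≫ (dual V' ◁ g₁)) ▷ dual V'')

lemma ptrR_step :
    ptrR (G₂ V' V'' g₂ ≫ f ≫ G₁ V' V'' g₁) =
      ((dual V' ◁ g₂) ≫ (α_ (dual V') (V' ⊗ V) V'').inv) ≫ (Zc f V' ▷ V'') ≫
        ((α_ (dual V') (V' ⊗ W) V'').hom ≫ (dual V' ◁ g₁)) := by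
  rw [show G₂ V' V'' g₂ ≫ f ≫ G₁ V' V'' g₁ =
      ((((dual V' ◁ g₂) ≫ (α_ (dual V') (V' ⊗ V) V'').inv) ▷ dual V'') ≫
        (α_ (dual V' ⊗ (V' ⊗ V)) V'' (dual V'')).hom ≫
        ((dual V' ⊗ (V' ⊗ V)) ◁ ev' V'') ≫ (ρ_ (dual V' ⊗ (V' ⊗ V))).hom ≫
        Zc f V' ≫ (ρ_ (dual V' ⊗ (V' ⊗ W))).inv ≫
        ((dual V' ⊗ (V' ⊗ W)) ◁ cRt V'') ≫
        (α_ (dual V' ⊗ (V' ⊗ W)) V'' (dual V'')).inv ≫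
        ((((α_ (dual V') (V' ⊗ W) V'').hom ≫ (dual V' ◁ g₁))) ▷ dual V'')) from by
      simp only [G₂, G₁, Zc, Category.assoc]]
  rw [ptrR_eq_gptrR, cRt, gptrR_bend, thetaR_cancel, tensorHom_id]

lemma ptrL_step :
    ptrL (((dual V' ◁ g₂) ≫ (α_ (dual V') (V' ⊗ V) V'').inv) ≫ (Zc f V' ▷ V'') ≫
        ((α_ (dual V') (V' ⊗ W) V'').hom ≫ (dual V' ◁ g₁))) =
      g₂ ≫ ((V' ◁ f) ▷ V'') ≫ g₁ := by
  rw [show ((dual V' ◁ g₂) ≫ (α_ (dual V') (V' ⊗ V) V'').inv) ≫ (Zc f V' ▷ V'') ≫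
        ((α_ (dual V') (V' ⊗ W) V'').hom ≫ (dual V' ◁ g₁)) =
      ((dual V' ◁ (g₂ ≫ (α_ V' V V'').hom)) ≫ (α_ (dual V') V' (V ⊗ V'')).inv ≫
        (ev V' ▷ (V ⊗ V'')) ≫ (λ_ (V ⊗ V'')).hom ≫ (f ▷ V'') ≫ (λ_ (W ⊗ V'')).inv ≫
        (cLt V' ▷ (W ⊗ V'')) ≫ (α_ (dual V') V' (W ⊗ V'')).hom ≫
        (dual V' ◁ ((α_ V' W V'').inv ≫ g₁))) from by
      simp only [Zc, Category.assoc, MonoidalCategory.whiskerLeft_comp, comp_whiskerRight]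
      monoidal]
  rw [ptrL_eq_gptrL, gptrL_bend, thetaL_cancel', id_tensorHom]
  simp only [Category.assoc, MonoidalCategory.whiskerLeft_comp]
  rw [← associator_naturality_middle_assoc, Iso.hom_inv_id_assoc]

end Assembly

end SkeinPaper

open SkeinPaper

/-- The kernel of an m-trace is closed under tensoring with
identities: if `f ∈ N_t(V,W)` then `id_{V'} ⊗ f ⊗ id_{V''} ∈ N_t`. -/
theorem stmt_4 {k : Type*} [Field k] {C : Type*} [Category C] [MonoidalCategory C]
    [Preadditive C] [Linear k C] [PivotalData C]
    {I : CatIdeal C} (τ : MTrace k I)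
    {V W : C} (f : V ⟶ W) (hf : τ.inKer k f) (V' V'' : C) :
    τ.inKer k ((V' ◁ f) ▷ V'') := by
  open SkeinPaper.PivotalData in
  intro U hU g₁ g₂
  have key : τ.t U hU (g₂ ≫ ((V' ◁ f) ▷ V'') ≫ g₁) =
      τ.t ((dual V' ⊗ U) ⊗ dual V'')
        (I.tensor_right (dual V'') (I.tensor_left (dual V') hU))
        (G₂ V' V'' g₂ ≫ f ≫ G₁ V' V'' g₁) := by
    rw [τ.rightPartial (dual V'') (I.tensor_left (dual V') hU), ptrR_step,
      τ.leftPartial (dual V') hU, ptrL_step]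
  rw [key]
  exact hf _ _ (G₁ V' V'' g₁) (G₂ V' V'' g₂)
end

section
/- Let t be an m-trace on an ideal I of a pivotal k-category C, let π : C → C/N_t be the quotient by the kernel N_t of t, and let J be the ideal of C/N_t generated by π(I). Then every object of J is of the form π(W) where π(W) is a retract of π(V) for some V ∈ I. Moreover, choosing i : W → V and p : V → W in C with p∘i = id_W + n for some n ∈ N_t(W,W), the assignment t̄_{π(W)}(f̄) := t_V(i∘f∘p) (for any lift f of f̄) is well-defined: it is independent of the choices of the lift f and of the morphisms i, p, V. -/
open CategoryTheory CategoryTheory.MonoidalCategory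

open SkeinPaper

variable {k : Type*} [Field k] {C : Type*} [Category C] [MonoidalCategory C]
  [Preadditive C] [Linear k C] [PivotalData C]

/-- An "ideal of the quotient category `C/N_t`", expressed in `C`: a class of
objects closed under tensoring and under retracts modulo the kernel `N_t` of
the m-trace `τ`. -/
structure QuotIdeal {I : CatIdeal C} (τ : MTrace k I) where
  mem : C → Prop
  tensor_right : ∀ ⦃V : C⦄ (W : C), mem V → mem (V ⊗ W)
  tensor_left : ∀ ⦃V : C⦄ (W : C), mem V → mem (W ⊗ V)
  retract : ∀ ⦃W V : C⦄ (i : W ⟶ V) (p : V ⟶ W),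
    τ.inKer k (i ≫ p - 𝟙 W) → mem V → mem W

/-- Membership in the ideal `J` of `C/N_t` generated by `π(I)`. -/
def Jmem {I : CatIdeal C} (τ : MTrace k I) (W : C) : Prop :=
  ∀ J : QuotIdeal τ, (∀ V : C, I.mem V → J.mem V) → J.mem W


set_option linter.unusedSectionVars false

section AuxStmt10

open SkeinPaper.PivotalData

/-! ### Auxiliary facts about the pivotal data -/

lemma zig1'aux (V : C) : (coev V ▷ V) ≫ (α_ V (dual V) V).hom ≫ (V ◁ ev V) =
    (λ_ V).hom ≫ (ρ_ V).inv := by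
  have h := zig1 (C := C) V
  rw [← cancel_epi (λ_ V).inv, ← cancel_mono (ρ_ V).hom]
  simpa using h

lemma zig2'aux (V : C) : (dual V ◁ coev V) ≫ (α_ (dual V) V (dual V)).inv ≫ (ev V ▷ dual V) =
    (ρ_ (dual V)).hom ≫ (λ_ (dual V)).inv := by
  have h := zig2 (C := C) V
  rw [← cancel_epi (ρ_ (dual V)).inv, ← cancel_mono (λ_ (dual V)).hom]
  simpa using h

lemma zig3'aux (V : C) : (V ◁ coev' V) ≫ (α_ V (dual V) V).inv ≫ (ev' V ▷ V) =
    (ρ_ V).hom ≫ (λ_ V).inv := by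
  have h := zig3 (C := C) V
  rw [← cancel_epi (ρ_ V).inv, ← cancel_mono (λ_ V).hom]
  simpa using h

lemma zig4'aux (V : C) : (coev' V ▷ dual V) ≫ (α_ (dual V) V (dual V)).hom ≫ (dual V ◁ ev' V) =
    (λ_ (dual V)).hom ≫ (ρ_ (dual V)).inv := by
  have h := zig4 (C := C) V
  rw [← cancel_epi (λ_ (dual V)).inv, ← cancel_mono (ρ_ (dual V)).hom]
  simpa using h

/-- `(dual X, X)` form an exact pairing via the primed (co)evaluations. -/
def pairA (X : C) : ExactPairing (dual X) X where
  coevaluation' := coev' X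
  evaluation' := ev' X
  coevaluation_evaluation' := zig3'aux X
  evaluation_coevaluation' := zig4'aux X

/-- `(dual X, dual (dual X))` form an exact pairing via the unprimed (co)evaluations. -/
def pairB (X : C) : ExactPairing (dual X) (dual (dual X)) where
  coevaluation' := coev (dual X)
  evaluation' := ev (dual X)
  coevaluation_evaluation' := zig2'aux (dual X)
  evaluation_coevaluation' := zig1'aux (dual X)

/-- The canonical comparison `X ⟶ dual (dual X)` of the two right duals of `dual X`. -/
def umap (X : C) : X ⟶ dual (dual X) :=
  (ρ_ X).inv ≫ (X ◁ coev (dual X)) ≫ (α_ X (dual X) (dual (dual X))).inv ≫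
    (ev' X ▷ dual (dual X)) ≫ (λ_ (dual (dual X))).hom

/-- The canonical comparison `dual (dual X) ⟶ X` of the two right duals of `dual X`. -/
def vmap (X : C) : dual (dual X) ⟶ X :=
  (ρ_ (dual (dual X))).inv ≫ (dual (dual X) ◁ coev' X) ≫ (α_ (dual (dual X)) (dual X) X).inv ≫
    (ev (dual X) ▷ X) ≫ (λ_ X).hom

lemma umap_eq_hom (X : C) : umap X = (rightDualIso (pairA X) (pairB X)).hom := by
  dsimp [rightDualIso, rightAdjointMate, umap, ExactPairing.coevaluation,
    ExactPairing.evaluation, pairA, pairB]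
  monoidal

lemma vmap_eq_inv (X : C) : vmap X = (rightDualIso (pairA X) (pairB X)).inv := by
  dsimp [rightDualIso, rightAdjointMate, vmap, ExactPairing.coevaluation,
    ExactPairing.evaluation, pairA, pairB]
  monoidal

lemma umap_vmap (X : C) : umap X ≫ vmap X = 𝟙 X := by
  rw [umap_eq_hom, vmap_eq_inv, Iso.hom_inv_id]

/-! ### Bending a right tensor factor -/

/-- Auxiliary coevaluation-type morphism. -/
def PbR (X : C) : 𝟙_ C ⟶ X ⊗ dual X := coev' (dual X) ≫ (vmap X ▷ dual X)

def aR {U W X : C} (g : U ⟶ W ⊗ X) : U ⊗ dual X ⟶ W :=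
  (g ▷ dual X) ≫ (α_ W X (dual X)).hom ≫ (W ◁ ev' X) ≫ (ρ_ W).hom

def bR {U W X : C} (h : W ⊗ X ⟶ U) : W ⟶ U ⊗ dual X :=
  (ρ_ W).inv ≫ (W ◁ PbR X) ≫ (α_ W X (dual X)).inv ≫ (h ▷ dual X)

lemma pieceA {U W X : C} (g : U ⟶ W ⊗ X) :
    (ρ_ U).inv ≫ (U ◁ coev (dual X)) ≫ (α_ U (dual X) (dual (dual X))).inv ≫
      (aR g ▷ dual (dual X)) = g ≫ (W ◁ umap X) := by
  dsimp [aR, umap]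
  calc
    _ = 𝟙 _ ⊗≫ (U ◁ coev (dual X) ≫ g ▷ (dual X ⊗ dual (dual X))) ⊗≫
        (W ◁ ev' X) ▷ dual (dual X) ⊗≫ 𝟙 _ := by monoidal
    _ = 𝟙 _ ⊗≫ (g ▷ 𝟙_ C ≫ (W ⊗ X) ◁ coev (dual X)) ⊗≫
        (W ◁ ev' X) ▷ dual (dual X) ⊗≫ 𝟙 _ := by rw [← whisker_exchange]
    _ = _ := by monoidal

lemma pieceB {U W X : C} (h : W ⊗ X ⟶ U) :
    (bR h ▷ dual (dual X)) ≫ (α_ U (dual X) (dual (dual X))).hom ≫ (U ◁ ev' (dual X)) ≫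
      (ρ_ U).hom = (W ◁ vmap X) ≫ h := by
  dsimp [bR, PbR]
  calc
    _ = 𝟙 _ ⊗≫ W ◁ (coev' (dual X) ≫ vmap X ▷ dual X) ▷ dual (dual X) ⊗≫
        (h ▷ (dual X ⊗ dual (dual X)) ≫ U ◁ ev' (dual X)) ⊗≫ 𝟙 _ := by monoidal
    _ = 𝟙 _ ⊗≫ W ◁ (coev' (dual X) ≫ vmap X ▷ dual X) ▷ dual (dual X) ⊗≫
        ((W ⊗ X) ◁ ev' (dual X) ≫ h ▷ 𝟙_ C) ⊗≫ 𝟙 _ := by rw [whisker_exchange]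
    _ = 𝟙 _ ⊗≫ W ◁ (coev' (dual X) ▷ dual (dual X)) ⊗≫
        W ◁ ((vmap X ▷ (dual X ⊗ dual (dual X))) ≫ X ◁ ev' (dual X)) ⊗≫ h ⊗≫ 𝟙 _ := by
      monoidal
    _ = 𝟙 _ ⊗≫ W ◁ (coev' (dual X) ▷ dual (dual X)) ⊗≫
        W ◁ ((dual (dual X) ◁ ev' (dual X)) ≫ vmap X ▷ 𝟙_ C) ⊗≫ h ⊗≫ 𝟙 _ := by
      rw [whisker_exchange]
    _ = 𝟙 _ ⊗≫ W ◁ ((coev' (dual X) ▷ dual (dual X)) ≫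
        (α_ (dual (dual X)) (dual X) (dual (dual X))).hom ≫
        (dual (dual X) ◁ ev' (dual X))) ⊗≫ W ◁ vmap X ⊗≫ h ⊗≫ 𝟙 _ := by monoidal
    _ = 𝟙 _ ⊗≫ W ◁ ((λ_ (dual (dual X))).hom ≫ (ρ_ (dual (dual X))).inv) ⊗≫
        W ◁ vmap X ⊗≫ h ⊗≫ 𝟙 _ := by rw [zig4'aux (dual X)]
    _ = _ := by monoidal

lemma keyR {U W X : C} (f : W ⟶ W) (g : U ⟶ W ⊗ X) (h : W ⊗ X ⟶ U) :
    ptrR (aR g ≫ f ≫ bR h) = g ≫ (f ▷ X) ≫ h := by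
  have e : ptrR (aR g ≫ f ≫ bR h) =
      ((ρ_ U).inv ≫ (U ◁ coev (dual X)) ≫ (α_ U (dual X) (dual (dual X))).inv ≫
        (aR g ▷ dual (dual X))) ≫ (f ▷ dual (dual X)) ≫
      ((bR h ▷ dual (dual X)) ≫ (α_ U (dual X) (dual (dual X))).hom ≫
        (U ◁ ev' (dual X)) ≫ (ρ_ U).hom) := by
    dsimp [ptrR]; simp [comp_whiskerRight]
  rw [e, pieceA, pieceB]
  calc
    _ = g ≫ ((W ◁ umap X) ≫ (f ▷ dual (dual X))) ≫ (W ◁ vmap X) ≫ h := by simp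
    _ = g ≫ ((f ▷ X) ≫ (W ◁ umap X)) ≫ (W ◁ vmap X) ≫ h := by rw [whisker_exchange]
    _ = g ≫ (f ▷ X) ≫ (W ◁ (umap X ≫ vmap X)) ≫ h := by simp
    _ = _ := by rw [umap_vmap]; simp

/-! ### Bending a left tensor factor -/

def QaL (X : C) : dual X ⊗ X ⟶ 𝟙_ C := (dual X ◁ umap X) ≫ ev' (dual X)

def aL {U W X : C} (g : U ⟶ X ⊗ W) : dual X ⊗ U ⟶ W :=
  (dual X ◁ g) ≫ (α_ (dual X) X W).inv ≫ (QaL X ▷ W) ≫ (λ_ W).hom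

def bL {U W X : C} (h : X ⊗ W ⟶ U) : W ⟶ dual X ⊗ U :=
  (λ_ W).inv ≫ (coev' X ▷ W) ≫ (α_ (dual X) X W).hom ≫ (dual X ◁ h)

lemma pieceAL {U W X : C} (g : U ⟶ X ⊗ W) :
    (λ_ U).inv ≫ (coev' (dual X) ▷ U) ≫ (α_ (dual (dual X)) (dual X) U).hom ≫
      (dual (dual X) ◁ aL g) = g ≫ (umap X ▷ W) := by
  dsimp [aL, QaL]
  calc
    _ = 𝟙 _ ⊗≫ (coev' (dual X) ▷ U ≫ (dual (dual X) ⊗ dual X) ◁ g) ⊗≫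
        ((dual (dual X) ⊗ dual X) ◁ (umap X ▷ W)) ⊗≫
        (dual (dual X) ◁ (ev' (dual X) ▷ W)) ⊗≫ 𝟙 _ := by monoidal
    _ = 𝟙 _ ⊗≫ (𝟙_ C ◁ g ≫ coev' (dual X) ▷ (X ⊗ W)) ⊗≫
        ((dual (dual X) ⊗ dual X) ◁ (umap X ▷ W)) ⊗≫
        (dual (dual X) ◁ (ev' (dual X) ▷ W)) ⊗≫ 𝟙 _ := by rw [whisker_exchange]
    _ = 𝟙 _ ⊗≫ (𝟙_ C ◁ g) ⊗≫ ((coev' (dual X) ▷ (X ⊗ W)) ≫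
        ((dual (dual X) ⊗ dual X) ◁ (umap X ▷ W))) ⊗≫
        (dual (dual X) ◁ (ev' (dual X) ▷ W)) ⊗≫ 𝟙 _ := by monoidal
    _ = 𝟙 _ ⊗≫ (𝟙_ C ◁ g) ⊗≫ ((𝟙_ C ◁ (umap X ▷ W)) ≫
        (coev' (dual X) ▷ (dual (dual X) ⊗ W))) ⊗≫
        (dual (dual X) ◁ (ev' (dual X) ▷ W)) ⊗≫ 𝟙 _ := by rw [← whisker_exchange]
    _ = g ⊗≫ (umap X ▷ W) ⊗≫ (((coev' (dual X) ▷ dual (dual X)) ≫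
        (α_ (dual (dual X)) (dual X) (dual (dual X))).hom ≫
        (dual (dual X) ◁ ev' (dual X))) ▷ W) ⊗≫ 𝟙 _ := by monoidal
    _ = g ⊗≫ (umap X ▷ W) ⊗≫ (((λ_ (dual (dual X))).hom ≫ (ρ_ (dual (dual X))).inv) ▷ W)
        ⊗≫ 𝟙 _ := by rw [zig4'aux (dual X)]
    _ = _ := by monoidal

lemma pieceBL {U W X : C} (h : X ⊗ W ⟶ U) :
    (dual (dual X) ◁ bL h) ≫ (α_ (dual (dual X)) (dual X) U).inv ≫ (ev (dual X) ▷ U) ≫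
      (λ_ U).hom = (vmap X ▷ W) ≫ h := by
  dsimp [bL, vmap]
  calc
    _ = 𝟙 _ ⊗≫ dual (dual X) ◁ (coev' X ▷ W) ⊗≫
        ((dual (dual X) ⊗ dual X) ◁ h ≫ ev (dual X) ▷ U) ⊗≫ 𝟙 _ := by monoidal
    _ = 𝟙 _ ⊗≫ dual (dual X) ◁ (coev' X ▷ W) ⊗≫
        (ev (dual X) ▷ (X ⊗ W) ≫ 𝟙_ C ◁ h) ⊗≫ 𝟙 _ := by rw [whisker_exchange]
    _ = _ := by monoidal

lemma keyL {U W X : C} (f : W ⟶ W) (g : U ⟶ X ⊗ W) (h : X ⊗ W ⟶ U) :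
    ptrL (aL g ≫ f ≫ bL h) = g ≫ (X ◁ f) ≫ h := by
  have e : ptrL (aL g ≫ f ≫ bL h) =
      ((λ_ U).inv ≫ (coev' (dual X) ▷ U) ≫ (α_ (dual (dual X)) (dual X) U).hom ≫
        (dual (dual X) ◁ aL g)) ≫ (dual (dual X) ◁ f) ≫
      ((dual (dual X) ◁ bL h) ≫ (α_ (dual (dual X)) (dual X) U).inv ≫
        (ev (dual X) ▷ U) ≫ (λ_ U).hom) := by
    dsimp [ptrL]; simp [MonoidalCategory.whiskerLeft_comp]
  rw [e, pieceAL, pieceBL]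
  calc
    _ = g ≫ ((umap X ▷ W) ≫ (dual (dual X) ◁ f)) ≫ (vmap X ▷ W) ≫ h := by simp
    _ = g ≫ ((X ◁ f) ≫ (umap X ▷ W)) ≫ (vmap X ▷ W) ≫ h := by rw [← whisker_exchange]
    _ = g ≫ (X ◁ f) ≫ ((umap X ≫ vmap X) ▷ W) ≫ h := by simp
    _ = _ := by rw [umap_vmap]; simp

/-! ### Trace identities and kernel closure -/

lemma traceR {I : CatIdeal C} (τ : MTrace k I) (W X : C) {U : C} (hU : I.mem U)
    (f : W ⟶ W) (g : U ⟶ W ⊗ X) (h : W ⊗ X ⟶ U) :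
    τ.t U hU (g ≫ (f ▷ X) ≫ h) =
      τ.t (U ⊗ dual X) (I.tensor_right (dual X) hU) (aR g ≫ f ≫ bR h) := by
  rw [τ.rightPartial (dual X) hU (aR g ≫ f ≫ bR h), keyR]

lemma traceL {I : CatIdeal C} (τ : MTrace k I) (W X : C) {U : C} (hU : I.mem U)
    (f : W ⟶ W) (g : U ⟶ X ⊗ W) (h : X ⊗ W ⟶ U) :
    τ.t U hU (g ≫ (X ◁ f) ≫ h) =
      τ.t (dual X ⊗ U) (I.tensor_left (dual X) hU) (aL g ≫ f ≫ bL h) := by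
  rw [τ.leftPartial (dual X) hU (aL g ≫ f ≫ bL h), keyL]

lemma inKer_comp {I : CatIdeal C} (τ : MTrace k I) {A B A' B' : C} (a : A' ⟶ A) (b : B ⟶ B')
    {n : A ⟶ B} (hn : τ.inKer k n) : τ.inKer k (a ≫ n ≫ b) := by
  intro U hU g₁ g₂
  have := hn U hU (b ≫ g₁) (g₂ ≫ a)
  simpa [Category.assoc] using this

lemma inKer_add {I : CatIdeal C} (τ : MTrace k I) {A B : C} {m n : A ⟶ B}
    (hm : τ.inKer k m) (hn : τ.inKer k n) : τ.inKer k (m + n) := by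
  intro U hU g₁ g₂
  have e : g₂ ≫ (m + n) ≫ g₁ = g₂ ≫ m ≫ g₁ + g₂ ≫ n ≫ g₁ := by
    simp [Preadditive.comp_add, Preadditive.add_comp]
  rw [e, map_add, hm U hU g₁ g₂, hn U hU g₁ g₂, add_zero]

lemma inKer_zero {I : CatIdeal C} (τ : MTrace k I) {A B : C} : τ.inKer k (0 : A ⟶ B) := by
  intro U hU g₁ g₂
  simp

lemma kerWhiskerRight {I : CatIdeal C} (τ : MTrace k I) {W V : C} (X : C) {i : W ⟶ V}
    {p : V ⟶ W} (h : τ.inKer k (i ≫ p - 𝟙 W)) :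
    τ.inKer k ((i ▷ X) ≫ (p ▷ X) - 𝟙 (W ⊗ X)) := by
  intro U hU g₁ g₂
  have E1 : g₂ ≫ ((i ▷ X ≫ p ▷ X) - 𝟙 (W ⊗ X)) ≫ g₁ =
      g₂ ≫ ((i ≫ p) ▷ X) ≫ g₁ - g₂ ≫ ((𝟙 W) ▷ X) ≫ g₁ := by
    simp [Preadditive.sub_comp, Preadditive.comp_sub]
  have E2 : aR g₂ ≫ (i ≫ p) ≫ bR g₁ - aR g₂ ≫ 𝟙 W ≫ bR g₁ =
      aR g₂ ≫ (i ≫ p - 𝟙 W) ≫ bR g₁ := by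
    simp [Preadditive.sub_comp, Preadditive.comp_sub]
  rw [E1, map_sub, traceR τ W X hU (i ≫ p) g₂ g₁, traceR τ W X hU (𝟙 W) g₂ g₁, ← map_sub,
    E2]
  exact h (U ⊗ dual X) (I.tensor_right (dual X) hU) (bR g₁) (aR g₂)

lemma kerWhiskerLeft {I : CatIdeal C} (τ : MTrace k I) {W V : C} (X : C) {i : W ⟶ V}
    {p : V ⟶ W} (h : τ.inKer k (i ≫ p - 𝟙 W)) :
    τ.inKer k ((X ◁ i) ≫ (X ◁ p) - 𝟙 (X ⊗ W)) := by
  intro U hU g₁ g₂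
  have E1 : g₂ ≫ ((X ◁ i ≫ X ◁ p) - 𝟙 (X ⊗ W)) ≫ g₁ =
      g₂ ≫ (X ◁ (i ≫ p)) ≫ g₁ - g₂ ≫ (X ◁ (𝟙 W)) ≫ g₁ := by
    simp [Preadditive.sub_comp, Preadditive.comp_sub]
  have E2 : aL g₂ ≫ (i ≫ p) ≫ bL g₁ - aL g₂ ≫ 𝟙 W ≫ bL g₁ =
      aL g₂ ≫ (i ≫ p - 𝟙 W) ≫ bL g₁ := by
    simp [Preadditive.sub_comp, Preadditive.comp_sub]
  rw [E1, map_sub, traceL τ W X hU (i ≫ p) g₂ g₁, traceL τ W X hU (𝟙 W) g₂ g₁, ← map_sub,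
    E2]
  exact h (dual X ⊗ U) (I.tensor_left (dual X) hU) (bL g₁) (aL g₂)

/-- The candidate ideal of retracts-mod-`N` of objects of `I`. -/
def theJ {I : CatIdeal C} (τ : MTrace k I) : QuotIdeal τ where
  mem W := ∃ V : C, I.mem V ∧ ∃ (i : W ⟶ V) (p : V ⟶ W), τ.inKer k (i ≫ p - 𝟙 W)
  tensor_right := by
    rintro W X ⟨V, hV, i, p, hk⟩
    exact ⟨V ⊗ X, I.tensor_right X hV, i ▷ X, p ▷ X, kerWhiskerRight τ X hk⟩
  tensor_left := by
    rintro W X ⟨V, hV, i, p, hk⟩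
    exact ⟨X ⊗ V, I.tensor_left X hV, X ◁ i, X ◁ p, kerWhiskerLeft τ X hk⟩
  retract := by
    rintro W V i p hk ⟨V₀, hV₀, i₂, p₂, hk₂⟩
    refine ⟨V₀, hV₀, i ≫ i₂, p₂ ≫ p, ?_⟩
    have e : (i ≫ i₂) ≫ (p₂ ≫ p) - 𝟙 W =
        (i ≫ (i₂ ≫ p₂ - 𝟙 V) ≫ p) + (i ≫ p - 𝟙 W) := by
      simp [Preadditive.comp_sub, Preadditive.sub_comp]
    rw [e]
    exact inKer_add τ (inKer_comp τ i p hk₂) hk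

end AuxStmt10

/-- Every object of the ideal `J` of `C/N_t` generated by `π(I)`
is (the image of) a retract modulo `N_t` of some `V ∈ I`; and the purified
trace `t̄_{π(W)}(f̄) := t_V(i∘f∘p)` is well-defined, independent of the lift `f`
and of the choice of `V`, `i`, `p`. -/
theorem stmt_10 {I : CatIdeal C} (τ : MTrace k I) :
    (∀ W : C, Jmem τ W →
      ∃ V : C, I.mem V ∧ ∃ (i : W ⟶ V) (p : V ⟶ W), τ.inKer k (i ≫ p - 𝟙 W)) ∧
    (∀ (W V V' : C) (hV : I.mem V) (hV' : I.mem V')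
      (i : W ⟶ V) (p : V ⟶ W) (i' : W ⟶ V') (p' : V' ⟶ W),
      τ.inKer k (i ≫ p - 𝟙 W) → τ.inKer k (i' ≫ p' - 𝟙 W) →
      ∀ f f' : W ⟶ W, τ.inKer k (f - f') →
        τ.t V hV (p ≫ f ≫ i) = τ.t V' hV' (p' ≫ f' ≫ i')) := by
  constructor
  · intro W hW
    exact hW (theJ τ) fun V hV => ⟨V, hV, 𝟙 V, 𝟙 V, by simpa using inKer_zero τ⟩
  · intro W V V' hV hV' i p i' p' hk hk' f f' hff'
    have h1 : τ.t V hV (p ≫ f ≫ i) = τ.t V hV (p ≫ f' ≫ i) := by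
      have h0 := hff' V hV i p
      have e : p ≫ (f - f') ≫ i = p ≫ f ≫ i - p ≫ f' ≫ i := by
        simp [Preadditive.comp_sub, Preadditive.sub_comp]
      rw [e, map_sub, sub_eq_zero] at h0
      exact h0
    have e1 : (p ≫ f' ≫ i') ≫ (p' ≫ i) =
        (p ≫ f' ≫ i) + ((p ≫ f') ≫ (i' ≫ p' - 𝟙 W) ≫ i) := by
      simp [Preadditive.comp_sub, Preadditive.sub_comp]
    have h2 : τ.t V hV (p ≫ f' ≫ i) = τ.t V hV ((p ≫ f' ≫ i') ≫ (p' ≫ i)) := by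
      rw [e1, map_add, hk' V hV i (p ≫ f'), add_zero]
    have h3 := τ.cyclic hV' hV (p ≫ f' ≫ i') (p' ≫ i)
    have e2 : (p' ≫ i) ≫ (p ≫ f' ≫ i') =
        (p' ≫ f' ≫ i') + (p' ≫ (i ≫ p - 𝟙 W) ≫ (f' ≫ i')) := by
      simp [Preadditive.comp_sub, Preadditive.sub_comp]
    have h4 : τ.t V' hV' ((p' ≫ i) ≫ (p ≫ f' ≫ i')) = τ.t V' hV' (p' ≫ f' ≫ i') := by
      rw [e2, map_add, hk V' hV' (f' ≫ i') p', add_zero]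
    rw [h1, h2, h3, h4]
end

section
/- Let t be an m-trace on an ideal I of a (strict) pivotal k-category C. Then for all objects W, U with W* ∈ I and U ∈ I and any g ∈ End(W*⊗U), one has t_U(ptr_L^{W*}(g)) = t_{W**}((ptr_R^U(g))*). -/
open CategoryTheory CategoryTheory.MonoidalCategory

open SkeinPaper SkeinPaper.PivotalData


section Aux
variable {C : Type*} [Category C] [MonoidalCategory C] [PivotalData C]

theorem SkeinPaper.ptrR_conj_whisker {A X U : C} (g : X ⊗ U ⟶ X ⊗ U) (m : A ⊗ X ⟶ A ⊗ X) :
    ptrR ((α_ A X U).hom ≫ (A ◁ g) ≫ (α_ A X U).inv ≫ (m ▷ U)) =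
      (A ◁ ptrR g) ≫ m := by
  simp only [ptrR, comp_whiskerRight, Category.assoc]
  rw [associator_naturality_left_assoc, ← whisker_exchange_assoc,
    rightUnitor_naturality]
  simp only [← Category.assoc]; congr 1
  monoidal

theorem SkeinPaper.ptrR_snake {V : C} (h : V ⟶ V) :
    ptrR ((dual V ◁ h) ≫ ev V ≫ coev' V) = dualHom h := by
  have z4 := zig4 (C := C) V
  simp only [ptrR, dualHom, comp_whiskerRight, Category.assoc]
  rw [associator_inv_naturality_middle_assoc]
  congr 4
  calc (ev V ▷ dual V) ≫ (coev' V ▷ dual V) ≫ (α_ (dual V) V (dual V)).hom ≫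
        (dual V ◁ ev' V) ≫ (ρ_ (dual V)).hom
      = (ev V ▷ dual V) ≫ (λ_ (dual V)).hom ≫ (λ_ (dual V)).inv ≫ (coev' V ▷ dual V) ≫
        (α_ (dual V) V (dual V)).hom ≫ (dual V ◁ ev' V) ≫ (ρ_ (dual V)).hom := by simp
    _ = (ev V ▷ dual V) ≫ (λ_ (dual V)).hom := by rw [z4]; simp

end Aux

/-- For an m-trace `t` on an ideal `I`, objects `W`, `U` with
`W* ∈ I`, `U ∈ I` and `g ∈ End(W* ⊗ U)`, one has
`t_U(ptr_L^{W*}(g)) = t_{W**}((ptr_R^U(g))*)`. -/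
theorem stmt_15 {k : Type*} [Field k] {C : Type*} [Category C] [MonoidalCategory C]
    [Preadditive C] [Linear k C] [PivotalData C]
    {I : CatIdeal C} (τ : MTrace k I)
    (W U : C) (hWd : I.mem (dual W)) (hU : I.mem U)
    (hWdd : I.mem (dual (dual W))) (g : dual W ⊗ U ⟶ dual W ⊗ U) :
    τ.t U hU (ptrL g) = τ.t (dual (dual W)) hWdd (dualHom (ptrR g)) := by
  have memP : I.mem (dual (dual W) ⊗ dual W) := I.tensor_right (dual W) hWdd
  refine Eq.trans (b := τ.t (dual (dual W) ⊗ dual W) memP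
    ((dual (dual W) ◁ ptrR g) ≫ (ev (dual W) ≫ coev' (dual W)))) ?_ ?_
  · let a : (dual (dual W) ⊗ dual W) ⊗ U ⟶ U :=
      (α_ (dual (dual W)) (dual W) U).hom ≫ (dual (dual W) ◁ g) ≫
        (α_ (dual (dual W)) (dual W) U).inv ≫ (ev (dual W) ▷ U) ≫ (λ_ U).hom
    let b : U ⟶ (dual (dual W) ⊗ dual W) ⊗ U := (λ_ U).inv ≫ (coev' (dual W) ▷ U)
    have hba : ptrL g = b ≫ a := by
      simp only [ptrL, a, b, Category.assoc]
    have hab : a ≫ b =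
        (α_ (dual (dual W)) (dual W) U).hom ≫ (dual (dual W) ◁ g) ≫
          (α_ (dual (dual W)) (dual W) U).inv ≫ ((ev (dual W) ≫ coev' (dual W)) ▷ U) := by
      simp only [a, b, comp_whiskerRight, Category.assoc, Iso.hom_inv_id_assoc]
    calc τ.t U hU (ptrL g) = τ.t U hU (b ≫ a) := by rw [hba]
      _ = τ.t ((dual (dual W) ⊗ dual W) ⊗ U) (I.tensor_right U memP) (a ≫ b) :=
          τ.cyclic (I.tensor_right U memP) hU b a
      _ = τ.t (dual (dual W) ⊗ dual W) memP (ptrR (a ≫ b)) :=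
          τ.rightPartial U memP (a ≫ b)
      _ = _ := by rw [hab, SkeinPaper.ptrR_conj_whisker]
  · have h1 := τ.rightPartial (dual W) hWdd
      ((dual (dual W) ◁ ptrR g) ≫ ev (dual W) ≫ coev' (dual W))
    rw [SkeinPaper.ptrR_snake] at h1
    simpa [Category.assoc] using h1
end
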